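/- Let R be a commutative ring and M a finitely generated R-module. The map ω_M from the polynomial ring End_R(M)[u] (polynomials with coefficients in the R-algebra of R-linear endomorphisms of M) to the algebra End_{R[u]}(M[u]) of R[u]-linear endomorphisms of the R[u]-module M[u] of polynomials with coefficients in M, defined by ω_M(∑_i f_i u^i)(∑_j m_j u^j) = ∑_k (∑_{i+j=k} f_i(m_j)) u^k, is an isomorphism of R[u]-algebras; in particular it is bijective. -/

import Mathlib

open Polynomial PolynomialModule

section Aux

variable (R M : Type*) [CommRing R] [AddCommGroup M] [Module R M]

instance pmTower : IsScalarTower (Polynomial R) (Polynomial R) (PolynomialModule R M) :=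
  IsScalarTower.left _

lemma pm_smul_apply (r : R) (p : PolynomialModule R M) (i : ℕ) : (r • p).coeff i = r • p.coeff i := rfl

/-- `End_R(M)` mapped into `End_{R[X]}(M[X])` coefficientwise. -/
noncomputable def liftEnd :
    Module.End R M →+* Module.End (Polynomial R) (PolynomialModule R M) where
  toFun f :=
    { toFun := PolynomialModule.map R f
      map_add' := fun a b => map_add _ a b
      map_smul' := fun p q => by
        simp only [RingHom.id_apply]
        rw [PolynomialModule.map_smul, Algebra.algebraMap_self, Polynomial.map_id] }
  map_one' := LinearMap.ext fun q => PolynomialModule.ext <| DFunLike.ext _ _ fun k => rfl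
  map_mul' f g := LinearMap.ext fun q => PolynomialModule.ext <| DFunLike.ext _ _ fun k => rfl
  map_zero' := LinearMap.ext fun q => PolynomialModule.ext <| DFunLike.ext _ _ fun k => rfl
  map_add' f g := LinearMap.ext fun q => PolynomialModule.ext <| DFunLike.ext _ _ fun k => rfl

lemma liftEnd_apply (f : Module.End R M) (q : PolynomialModule R M) (k : ℕ) :
    (liftEnd R M f q).coeff k = f (q.coeff k) := rfl

lemma liftEnd_commute (f : Module.End R M) :
    Commute (liftEnd R M f)
      (algebraMap (Polynomial R) (Module.End (Polynomial R) (PolynomialModule R M)) X) := by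
  apply LinearMap.ext
  intro q
  show liftEnd R M f ((X : R[X]) • q) = (X : R[X]) • liftEnd R M f q
  exact (liftEnd R M f).map_smul X q

/-- The map `ω`. -/
noncomputable def omega :
    Polynomial (Module.End R M) →+* Module.End (Polynomial R) (PolynomialModule R M) :=
  Polynomial.eval₂RingHom' (liftEnd R M)
    (algebraMap (Polynomial R) (Module.End (Polynomial R) (PolynomialModule R M)) X)
    (liftEnd_commute R M)

lemma omega_def (P : Polynomial (Module.End R M)) :
    omega R M P = P.eval₂ (liftEnd R M)
      (algebraMap (Polynomial R) (Module.End (Polynomial R) (PolynomialModule R M)) X) := rfl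

lemma omega_coeff (P : Polynomial (Module.End R M)) (q : PolynomialModule R M) (k : ℕ) :
    (omega R M P q).coeff k = ∑ ij ∈ Finset.HasAntidiagonal.antidiagonal k, (P.coeff ij.1) (q.coeff ij.2) := by
  induction P using Polynomial.induction_on' with
  | add p r hp hr =>
      rw [map_add, LinearMap.add_apply, PolynomialModule.coeff_add, Finsupp.add_apply, hp, hr,
        ← Finset.sum_add_distrib]
      refine Finset.sum_congr rfl fun ij _ => ?_
      rw [Polynomial.coeff_add, LinearMap.add_apply]
  | monomial n a =>
      rw [omega_def, Polynomial.eval₂_monomial]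
      have h2 : ((algebraMap (Polynomial R)
          (Module.End (Polynomial R) (PolynomialModule R M)) X) ^ n) q = (X ^ n : R[X]) • q := by
        rw [← map_pow, Module.algebraMap_end_apply]
      rw [Module.End.mul_apply, h2, liftEnd_apply]
      rw [Polynomial.X_pow_eq_monomial, PolynomialModule.monomial_smul_apply]
      rw [Finset.Nat.sum_antidiagonal_eq_sum_range_succ_mk]
      simp only [coeff_monomial]
      have h3 : ∀ i ∈ Finset.range (k + 1),
          (if n = i then a else 0) (q.coeff (k - i)) = if n = i then a (q.coeff (k - i)) else 0 := by
        intro i _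
        split_ifs <;> simp
      rw [Finset.sum_congr rfl h3, Finset.sum_ite_eq, apply_ite a, map_zero]
      simp [Nat.lt_succ_iff]

end Aux

theorem stmt0 (R M : Type*) [CommRing R] [AddCommGroup M] [Module R M] [Module.Finite R M] :
    letI : IsScalarTower (Polynomial R) (Polynomial R) (PolynomialModule R M) :=
      IsScalarTower.left _
    ∃ e : Polynomial (Module.End R M) ≃+* Module.End (Polynomial R) (PolynomialModule R M),
      (∀ p : Polynomial R,
          e (p.map (algebraMap R (Module.End R M))) =
            algebraMap (Polynomial R) (Module.End (Polynomial R) (PolynomialModule R M)) p) ∧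
      (∀ (P : Polynomial (Module.End R M)) (q : PolynomialModule R M) (k : ℕ),
          (e P q).coeff k = ∑ ij ∈ Finset.HasAntidiagonal.antidiagonal k, (P.coeff ij.1) (q.coeff ij.2)) := by
  have hsingle0 : ∀ (P : Polynomial (Module.End R M)) (m : M) (k : ℕ),
      (omega R M P (single R 0 m)).coeff k = P.coeff k m := by
    intro P m k
    rw [omega_coeff]
    rw [Finset.sum_eq_single (k, 0)]
    · simp [single_apply]
    · rintro ⟨a, b⟩ hab hne
      rw [Finset.HasAntidiagonal.mem_antidiagonal] at hab
      have hb : b ≠ 0 := by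
        rintro rfl
        exact hne (by simp [← hab])
      rw [single_apply, Finsupp.single_apply, if_neg (fun h => hb h.symm), map_zero]
    · intro h
      exact absurd (by simp) h
  have inj : Function.Injective (omega R M) := by
    rw [injective_iff_map_eq_zero]
    intro P hP
    ext k m
    have := hsingle0 P m k
    rw [hP] at this
    simpa using this.symm
  have surj : Function.Surjective (omega R M) := by
    intro Φ
    set f : ℕ → Module.End R M := fun i =>
      (Finsupp.lapply i : (ℕ →₀ M) →ₗ[R] M).comp
        ((coeffLinearEquiv R R).toLinearMap.comp ((Φ.restrictScalars R).comp (lsingle R 0))) with hf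
    have hfapp : ∀ i m, f i m = (Φ (single R 0 m)).coeff i := fun i m => rfl
    obtain ⟨s, hs⟩ := Module.Finite.fg_top (R := R) (M := M)
    set N : ℕ := s.sup (fun g => (Φ (single R 0 g)).coeff.support.sup id) with hN
    have hbound : ∀ m : M, ∀ i, N < i → (Φ (single R 0 m)).coeff i = 0 := by
      intro m
      have hmem : m ∈ Submodule.span R (s : Set M) := hs ▸ Submodule.mem_top
      induction hmem using Submodule.span_induction with
      | mem g hg =>
          intro i hi
          by_contra hne
          have h1 : i ∈ (Φ (single R 0 g)).coeff.support :=
            Finsupp.mem_support_iff.mpr hne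
          have h2 : i ≤ N := le_trans (Finset.le_sup (f := id) h1)
            (Finset.le_sup (f := fun g => (Φ (single R 0 g)).coeff.support.sup id) hg)
          omega
      | zero =>
          intro i _
          rw [single_zero, map_zero]
          rfl
      | add a b _ _ ha hb =>
          intro i hi
          rw [single_add, map_add, PolynomialModule.coeff_add, Finsupp.add_apply, ha i hi, hb i hi,
            add_zero]
      | smul r a _ ha =>
          intro i hi
          rw [single_smul, LinearMap.map_smul_of_tower, pm_smul_apply, ha i hi, smul_zero]
    have hfc : ∀ i, N < i → f i = 0 := by
      intro i hi
      ext m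
      exact hbound m i hi
    refine ⟨∑ i ∈ Finset.range (N + 1), monomial i (f i), ?_⟩
    have hPcoeff : ∀ k, (∑ i ∈ Finset.range (N + 1), monomial i (f i)).coeff k = f k := by
      intro k
      rw [Polynomial.finset_sum_coeff]
      simp only [coeff_monomial]
      rw [Finset.sum_ite_eq']
      split_ifs with h
      · rfl
      · rw [Finset.mem_range, Nat.lt_succ_iff, not_le] at h
        exact (hfc k h).symm
    apply LinearMap.ext
    intro q
    induction q using PolynomialModule.induction_linear with
    | zero => rw [map_zero, map_zero]
    | add a b ha hb => rw [map_add, map_add, ha, hb]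
    | single j m =>
        have hjm : (single R j m : PolynomialModule R M) = (X ^ j : R[X]) • single R 0 m := by
          rw [Polynomial.X_pow_eq_monomial, PolynomialModule.monomial_smul_single]
          simp
        rw [hjm, LinearMap.map_smul, LinearMap.map_smul]
        congr 1
        refine PolynomialModule.ext <| DFunLike.ext _ _ fun k => ?_
        rw [hsingle0, hPcoeff]
        exact (hfapp k m).symm
  refine ⟨RingEquiv.ofBijective (omega R M) ⟨inj, surj⟩, ?_, ?_⟩
  · intro p
    apply LinearMap.ext
    intro q
    refine PolynomialModule.ext <| DFunLike.ext _ _ fun k => ?_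
    show (omega R M (p.map (algebraMap R (Module.End R M))) q).coeff k = _
    rw [omega_coeff, Module.algebraMap_end_apply, PolynomialModule.smul_apply]
    refine Finset.sum_congr rfl fun ij _ => ?_
    rw [Polynomial.coeff_map, Module.algebraMap_end_apply]
  · intro P q k
    exact omega_coeff R M P q k
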